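/- (Freedman's inequality.) Let δ ∈ (0, 1) and let M, v > 0 be fixed constants. Let (X_i)_{i=1}^{n} be real-valued random variables adapted to a filtration (G_i)_{i=0}^{n} such that almost surely E[X_i | G_{i−1}] = 0, |X_i| ≤ M, and Σ_{i=1}^{n} E[X_i² | G_{i−1}] ≤ v. Then with probability at least 1 − δ, Σ_{i=1}^{n} X_i ≤ √(2·v·log(1/δ)) + (2/3)·M·log(1/δ). -/

import Mathlib

set_option maxHeartbeats 1000000

open MeasureTheory Real Nat


lemma fact_ge_aux : ∀ n : ℕ, 2 * 3 ^ n ≤ (n + 2)! := by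
  intro n
  induction n with
  | zero => simp [Nat.factorial]
  | succ k ih =>
    have : (k + 3)! = (k + 3) * (k + 2)! := rfl
    calc 2 * 3 ^ (k + 1) = 3 * (2 * 3 ^ k) := by ring
    _ ≤ 3 * (k + 2)! := by omega
    _ ≤ (k + 3) * (k + 2)! := by
        have : (1:ℕ) ≤ (k+2)! := Nat.one_le_iff_ne_zero.2 (Nat.factorial_ne_zero _)
        nlinarith
    _ = (k + 3)! := rfl

lemma exp_quad {u u0 : ℝ} (h0 : 0 ≤ u0) (h3 : u0 < 3) (h : |u| ≤ u0) :
    Real.exp u ≤ 1 + u + u ^ 2 / (2 * (1 - u0 / 3)) := by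
  have hsum : Summable (fun n : ℕ => u ^ n / (n ! : ℝ)) := Real.summable_pow_div_factorial u
  have hexp : Real.exp u = ∑' n : ℕ, u ^ n / (n ! : ℝ) := by
    rw [Real.exp_eq_exp_ℝ, NormedSpace.exp_eq_tsum_div]
  have hsum1 : Summable (fun n : ℕ => u ^ (n + 1) / ((n + 1)! : ℝ)) :=
    (summable_nat_add_iff 1).2 hsum
  have hsum2 : Summable (fun n : ℕ => u ^ (n + 2) / ((n + 2)! : ℝ)) :=
    (summable_nat_add_iff 2).2 hsum
  have hq : 0 ≤ u0 / 3 := by linarith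
  have hq1 : u0 / 3 < 1 := by linarith
  have hgeo : Summable (fun n : ℕ => u ^ 2 / 2 * (u0 / 3) ^ n) :=
    (summable_geometric_of_lt_one hq hq1).mul_left _
  have hterm : ∀ n : ℕ, u ^ (n + 2) / ((n + 2)! : ℝ) ≤ u ^ 2 / 2 * (u0 / 3) ^ n := by
    intro n
    have hf : (2 * 3 ^ n : ℝ) ≤ ((n + 2)! : ℝ) := by
      exact_mod_cast fact_ge_aux n
    have hfpos : (0:ℝ) < ((n + 2)! : ℝ) := by positivity
    calc u ^ (n + 2) / ((n + 2)! : ℝ) ≤ |u ^ (n + 2)| / ((n + 2)! : ℝ) := by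
          gcongr
          exact le_abs_self _
    _ = |u| ^ (n + 2) / ((n + 2)! : ℝ) := by rw [abs_pow]
    _ ≤ (u ^ 2 * u0 ^ n) / (2 * 3 ^ n) := by
        apply div_le_div₀ (by positivity) ?_ (by positivity) hf
        calc |u| ^ (n + 2) = |u| ^ 2 * |u| ^ n := by ring
        _ ≤ u ^ 2 * u0 ^ n := by
            rw [sq_abs]
            exact mul_le_mul_of_nonneg_left (pow_le_pow_left₀ (abs_nonneg u) h n) (sq_nonneg u)
    _ = u ^ 2 / 2 * (u0 / 3) ^ n := by rw [div_pow]; ring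
  have htail : ∑' n : ℕ, u ^ (n + 2) / ((n + 2)! : ℝ) ≤ u ^ 2 / (2 * (1 - u0 / 3)) := by
    calc ∑' n : ℕ, u ^ (n + 2) / ((n + 2)! : ℝ) ≤ ∑' n : ℕ, u ^ 2 / 2 * (u0 / 3) ^ n :=
          Summable.tsum_le_tsum hterm hsum2 hgeo
    _ = u ^ 2 / 2 * (1 - u0 / 3)⁻¹ := by
        rw [tsum_mul_left, tsum_geometric_of_lt_one hq hq1]
    _ = u ^ 2 / (2 * (1 - u0 / 3)) := by
        field_simp
  rw [hexp, Summable.tsum_eq_zero_add hsum, Summable.tsum_eq_zero_add hsum1]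
  have e1 : u ^ (0:ℕ) / ((0:ℕ)! : ℝ) = 1 := by norm_num
  have e2 : u ^ (0+1:ℕ) / (((0+1:ℕ))! : ℝ) = u := by norm_num
  rw [e1, e2]
  have : ∑' (b : ℕ), u ^ (b + 1 + 1) / ((b + 1 + 1)! : ℝ)
      = ∑' (n : ℕ), u ^ (n + 2) / ((n + 2)! : ℝ) := by norm_num
  rw [this]
  linarith [htail]

lemma integrable_of_bound {Ω : Type*} {m0 : MeasurableSpace Ω} (μ : Measure Ω)
    [IsFiniteMeasure μ] {f : Ω → ℝ} (hf : AEStronglyMeasurable f μ) (C : ℝ)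
    (h : ∀ᵐ ω ∂μ, |f ω| ≤ C) : Integrable f μ :=
  Integrable.mono' (integrable_const C) hf (by simpa [Real.norm_eq_abs] using h)

/-- Freedman's inequality. -/
theorem stmt_9 {Ω : Type*} {m0 : MeasurableSpace Ω} (μ : Measure Ω) [IsProbabilityMeasure μ]
    (n : ℕ) (𝒢 : Filtration ℕ m0) (X : ℕ → Ω → ℝ)
    (δ M v : ℝ) (hδ : δ ∈ Set.Ioo (0:ℝ) 1) (hM : 0 < M) (hv : 0 < v)
    (hadapted : ∀ i, Measurable[𝒢 i] (X i))
    (hmean : ∀ i, (μ[X i | 𝒢 (i - 1)]) =ᵐ[μ] 0)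
    (hbound : ∀ i, ∀ᵐ ω ∂μ, |X i ω| ≤ M)
    (hvar : ∀ᵐ ω ∂μ,
      ∑ i ∈ Finset.Icc 1 n, (μ[fun ω' => (X i ω') ^ 2 | 𝒢 (i - 1)]) ω ≤ v) :
    1 - δ ≤ (μ {ω | ∑ i ∈ Finset.Icc 1 n, X i ω ≤
        Real.sqrt (2 * v * Real.log (1 / δ)) + (2 / 3) * M * Real.log (1 / δ)}).toReal := by
  obtain ⟨hδ0, hδ1⟩ := hδ
  set L : ℝ := Real.log (1 / δ) with hLdef
  have hL : 0 < L := Real.log_pos (by rw [lt_div_iff₀ hδ0]; linarith)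
  set b : ℝ := Real.sqrt (2 * L / v) with hbdef
  have hb : 0 < b := Real.sqrt_pos.2 (by positivity)
  have hb2 : b ^ 2 = 2 * L / v := Real.sq_sqrt (by positivity)
  set s : ℝ := M * b / 3 with hsdef
  have hs : 0 < s := by positivity
  set l : ℝ := b / (1 + s) with hldef
  have hl : 0 < l := by positivity
  have hlM3 : l * M < 3 := by
    rw [hldef, div_mul_eq_mul_div, div_lt_iff₀ (by linarith)]
    rw [hsdef]; ring_nf; nlinarith
  have hlM0 : 0 ≤ l * M := by positivity
  set c : ℝ := l ^ 2 / (2 * (1 - l * M / 3)) with hcdef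
  have hlM3' : 0 < 1 - l * M / 3 := by linarith
  have hc : 0 < c := by rw [hcdef]; positivity
  set t : ℝ := Real.sqrt (2 * v * L) + 2 / 3 * M * L with htdef
  -- key numeric identities
  have hbs : b * Real.sqrt (2 * v * L) = 2 * L := by
    rw [hbdef, ← Real.sqrt_mul (by positivity)]
    rw [show 2 * L / v * (2 * v * L) = (2 * L) ^ 2 by field_simp]
    exact Real.sqrt_sq (by positivity)
  have h1s : 1 - l * M / 3 = 1 / (1 + s) := by
    rw [hldef, hsdef]; field_simp; ring
  have hcv : c * v = L / (1 + s) := by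
    rw [hcdef, h1s, hldef]
    rw [div_pow]
    have hbv : b ^ 2 * v = 2 * L := by rw [hb2]; field_simp
    field_simp
    nlinarith [hbv, hs]
  have hlt : l * t = 2 * L := by
    rw [htdef, hldef, hsdef]
    have : b / (1 + M * b / 3) * (Real.sqrt (2 * v * L) + 2 / 3 * M * L)
        = (b * Real.sqrt (2 * v * L) + 2 / 3 * M * L * b) / (1 + M * b / 3) := by ring
    rw [this, hbs]
    field_simp
  have hexp_key : c * v - l * t ≤ -L := by
    rw [hcv, hlt]
    have : L / (1 + s) ≤ L := by
      rw [div_le_iff₀ (by linarith)]; nlinarith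
    linarith
  -- probabilistic part
  set CV : ℕ → Ω → ℝ := fun i => μ[fun ω' => (X i ω') ^ 2 | 𝒢 (i - 1)] with hCVdef
  have hXmeas : ∀ i, Measurable (X i) := fun i => (hadapted i).mono (𝒢.le i) le_rfl
  have hXb : ∀ᵐ ω ∂μ, ∀ i, |X i ω| ≤ M := ae_all_iff.2 hbound
  have hXint : ∀ i, Integrable (X i) μ := fun i =>
    integrable_of_bound μ (hXmeas i).aestronglyMeasurable M (hbound i)
  have hX2int : ∀ i, Integrable (fun ω => (X i ω) ^ 2) μ := by
    intro i
    refine integrable_of_bound μ ((hXmeas i).pow_const 2).aestronglyMeasurable (M ^ 2) ?_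
    filter_upwards [hbound i] with ω h
    rw [abs_pow]
    exact pow_le_pow_left₀ (abs_nonneg _) h 2
  have hCVsm : ∀ i, StronglyMeasurable[𝒢 (i - 1)] (CV i) := fun i => stronglyMeasurable_condExp
  have hCVb : ∀ᵐ ω ∂μ, ∀ i, 0 ≤ CV i ω ∧ CV i ω ≤ M ^ 2 := by
    rw [ae_all_iff]
    intro i
    have h1 : 0 ≤ᵐ[μ] CV i := condExp_nonneg (ae_of_all _ fun ω => sq_nonneg _)
    have h2 : CV i ≤ᵐ[μ] fun _ => M ^ 2 := by
      have hb2' : (fun ω => (X i ω) ^ 2) ≤ᵐ[μ] fun _ => M ^ 2 := by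
        filter_upwards [hbound i] with ω h
        calc (X i ω) ^ 2 = |X i ω| ^ 2 := (sq_abs _).symm
        _ ≤ M ^ 2 := pow_le_pow_left₀ (abs_nonneg _) h 2
      have := condExp_mono (m := 𝒢 (i - 1)) (hX2int i) (integrable_const (M ^ 2)) hb2'
      simpa [condExp_const (𝒢.le (i - 1))] using this
    filter_upwards [h1, h2] with ω e1 e2 using ⟨e1, e2⟩
  set S : ℕ → Ω → ℝ := fun k ω => ∑ i ∈ Finset.Icc 1 k, X i ω with hSdef
  set V : ℕ → Ω → ℝ := fun k ω => ∑ i ∈ Finset.Icc 1 k, CV i ω with hVdef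
  set Z : ℕ → Ω → ℝ := fun k ω => Real.exp (l * S k ω - c * V k ω) with hZdef
  have hSmeas : ∀ k, Measurable (S k) := fun k =>
    Finset.measurable_sum _ fun i _ => hXmeas i
  have hVmeas : ∀ k, Measurable (V k) := fun k =>
    Finset.measurable_sum _ fun i _ => ((hCVsm i).mono (𝒢.le _)).measurable
  have hZmeas : ∀ k, Measurable (Z k) := fun k =>
    Real.measurable_exp.comp (((hSmeas k).const_mul l).sub ((hVmeas k).const_mul c))
  have hZb : ∀ k, ∀ᵐ ω ∂μ, |Z k ω| ≤ Real.exp (l * (k * M)) := by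
    intro k
    filter_upwards [hXb, hCVb] with ω h1 h2
    rw [abs_of_nonneg (Real.exp_pos _).le]
    apply Real.exp_le_exp.2
    have hS : S k ω ≤ k * M := by
      calc S k ω ≤ ∑ i ∈ Finset.Icc 1 k, M :=
            Finset.sum_le_sum fun i _ => (abs_le.1 (h1 i)).2
      _ = k * M := by
          rw [Finset.sum_const, Nat.card_Icc]
          simp [nsmul_eq_mul]
    have hV : 0 ≤ V k ω := Finset.sum_nonneg fun i _ => (h2 i).1
    nlinarith [mul_le_mul_of_nonneg_left hS hl.le, mul_nonneg hc.le hV]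
  have hZint : ∀ k, Integrable (Z k) μ := fun k =>
    integrable_of_bound μ (hZmeas k).aestronglyMeasurable _ (hZb k)
  have hsumIcc : ∀ (f : ℕ → ℝ) (k : ℕ),
      ∑ i ∈ Finset.Icc 1 (k + 1), f i = (∑ i ∈ Finset.Icc 1 k, f i) + f (k + 1) := by
    intro f k
    have hins : Finset.Icc 1 (k + 1) = insert (k + 1) (Finset.Icc 1 k) := by
      ext x; simp only [Finset.mem_Icc, Finset.mem_insert]; omega
    rw [hins, Finset.sum_insert (by simp [Finset.mem_Icc])]
    ring
  have key : ∀ k, ∫ ω, Z k ω ∂μ ≤ 1 := by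
    intro k
    induction k with
    | zero => simp [hZdef, hSdef, hVdef]
    | succ k ih =>
      set W : Ω → ℝ := fun ω => Real.exp (l * S k ω - c * V k ω - c * CV (k + 1) ω) with hWdef
      set g : Ω → ℝ := fun ω => Real.exp (l * X (k + 1) ω) with hgdef
      have hZW : Z (k + 1) = W * g := by
        funext ω
        simp only [hZdef, hWdef, hgdef, hSdef, hVdef, Pi.mul_apply]
        rw [← Real.exp_add]
        congr 1
        rw [hsumIcc (fun i => X i ω) k, hsumIcc (fun i => CV i ω) k]
        ring
      have hWsm : StronglyMeasurable[𝒢 k] W := by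
        apply Measurable.stronglyMeasurable
        apply Real.measurable_exp.comp
        have hSk : Measurable[𝒢 k] (S k) := Finset.measurable_sum _ fun i hi =>
          (hadapted i).mono (𝒢.mono (Finset.mem_Icc.1 hi).2) le_rfl
        have hVk : Measurable[𝒢 k] (V k) := Finset.measurable_sum _ fun i hi => by
          refine ((hCVsm i).measurable).mono (𝒢.mono ?_) le_rfl
          have := (Finset.mem_Icc.1 hi).2
          omega
        have hCVk1 : Measurable[𝒢 k] (CV (k + 1)) := (hCVsm (k + 1)).measurable
        exact ((hSk.const_mul l).sub (hVk.const_mul c)).sub (hCVk1.const_mul c)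
      have hgmeas : Measurable g := Real.measurable_exp.comp ((hXmeas (k + 1)).const_mul l)
      have hgb : ∀ᵐ ω ∂μ, |g ω| ≤ Real.exp (l * M) := by
        filter_upwards [hbound (k + 1)] with ω h
        rw [abs_of_nonneg (Real.exp_pos _).le]
        exact Real.exp_le_exp.2 (by nlinarith [(abs_le.1 h).2])
      have hgint : Integrable g μ := integrable_of_bound μ hgmeas.aestronglyMeasurable _ hgb
      have hWgint : Integrable (W * g) μ := by rw [← hZW]; exact hZint (k + 1)
      have hpull : μ[W * g | 𝒢 k] =ᵐ[μ] W * μ[g | 𝒢 k] :=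
        condExp_mul_of_stronglyMeasurable_left hWsm hWgint hgint
      have hpoly : g ≤ᵐ[μ] fun ω => 1 + l * X (k + 1) ω + c * (X (k + 1) ω) ^ 2 := by
        filter_upwards [hbound (k + 1)] with ω h
        have h1 : |l * X (k + 1) ω| ≤ l * M := by
          rw [abs_mul, abs_of_nonneg hl.le]
          exact mul_le_mul_of_nonneg_left h hl.le
        calc g ω ≤ 1 + l * X (k + 1) ω + (l * X (k + 1) ω) ^ 2 / (2 * (1 - l * M / 3)) :=
              exp_quad hlM0 hlM3 h1
        _ = 1 + l * X (k + 1) ω + c * (X (k + 1) ω) ^ 2 := by rw [hcdef]; ring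
      have hpolyint : Integrable (fun ω => 1 + l * X (k + 1) ω + c * (X (k + 1) ω) ^ 2) μ := by
        have := (((integrable_const (1:ℝ)).add ((hXint (k + 1)).const_mul l)).add
          ((hX2int (k + 1)).const_mul c))
        exact this
      have hcondpoly : μ[(fun ω => 1 + l * X (k + 1) ω + c * (X (k + 1) ω) ^ 2) | 𝒢 k]
          =ᵐ[μ] fun ω => 1 + c * CV (k + 1) ω := by
        have e : (fun ω => 1 + l * X (k + 1) ω + c * (X (k + 1) ω) ^ 2)
            = ((fun _ => (1:ℝ)) + l • X (k + 1)) + (c • fun ω => (X (k + 1) ω) ^ 2) := rfl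
        rw [e]
        have hA := condExp_add (μ := μ) (m := 𝒢 k)
          ((integrable_const (1:ℝ)).add ((hXint (k + 1)).smul l))
          ((hX2int (k + 1)).smul c)
        have hB := condExp_add (μ := μ) (m := 𝒢 k) (integrable_const (1:ℝ))
          ((hXint (k + 1)).smul l)
        have hC := condExp_smul (μ := μ) (m := 𝒢 k) l (X (k + 1))
        have hD := condExp_smul (μ := μ) (m := 𝒢 k) c (fun ω => (X (k + 1) ω) ^ 2)
        have hE := hmean (k + 1)
        filter_upwards [hA, hB, hC, hD, hE] with ω e1 e2 e3 e4 e5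
        simp only [Pi.add_apply, Pi.smul_apply, smul_eq_mul] at *
        rw [e1, e2, e3, e4]
        have e6 : (μ[X (k + 1)|𝒢 k]) ω = 0 := e5
        have e7 : (μ[fun _ : Ω => (1:ℝ)|𝒢 k]) ω = 1 := by
          rw [condExp_const (𝒢.le k)]
        rw [e6, e7]
        show 1 + l * 0 + c * CV (k + 1) ω = 1 + c * CV (k + 1) ω
        ring
      have hstep : μ[Z (k + 1) | 𝒢 k] ≤ᵐ[μ] Z k := by
        rw [hZW]
        have hcondg := condExp_mono (μ := μ) (m := 𝒢 k) hgint hpolyint hpoly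
        filter_upwards [hpull, hcondg, hcondpoly, hCVb] with ω h1 h2 h3 h4
        rw [h1]
        have hg_le : (μ[g | 𝒢 k]) ω ≤ Real.exp (c * CV (k + 1) ω) := by
          refine (h2.trans (le_of_eq h3)).trans ?_
          have := Real.add_one_le_exp (c * CV (k + 1) ω)
          linarith
        calc W ω * (μ[g | 𝒢 k]) ω ≤ W ω * Real.exp (c * CV (k + 1) ω) :=
              mul_le_mul_of_nonneg_left hg_le (Real.exp_pos _).le
        _ = Z k ω := by
            simp only [hWdef, hZdef]
            rw [← Real.exp_add]
            congr 1
            ring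
      calc ∫ ω, Z (k + 1) ω ∂μ = ∫ ω, (μ[Z (k + 1) | 𝒢 k]) ω ∂μ :=
            (integral_condExp (𝒢.le k)).symm
      _ ≤ ∫ ω, Z k ω ∂μ := integral_mono_ae integrable_condExp (hZint k) hstep
      _ ≤ 1 := ih
  -- from key to the tail bound
  have hexpint : Integrable (fun ω => Real.exp (l * S n ω)) μ := by
    refine integrable_of_bound μ
      (Real.measurable_exp.comp ((hSmeas n).const_mul l)).aestronglyMeasurable
      (Real.exp (l * (n * M))) ?_
    filter_upwards [hXb] with ω h1
    rw [abs_of_nonneg (Real.exp_pos _).le]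
    apply Real.exp_le_exp.2
    have hS : S n ω ≤ n * M := by
      calc S n ω ≤ ∑ i ∈ Finset.Icc 1 n, M :=
            Finset.sum_le_sum fun i _ => (abs_le.1 (h1 i)).2
      _ = n * M := by rw [Finset.sum_const, Nat.card_Icc]; simp [nsmul_eq_mul]
    exact mul_le_mul_of_nonneg_left hS hl.le
  have hEexp : ∫ ω, Real.exp (l * S n ω) ∂μ ≤ Real.exp (c * v) := by
    have hvar' : ∀ᵐ ω ∂μ, V n ω ≤ v := hvar
    have hle : (fun ω => Real.exp (l * S n ω)) ≤ᵐ[μ] fun ω => Real.exp (c * v) * Z n ω := by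
      filter_upwards [hvar'] with ω h
      rw [show l * S n ω = c * V n ω + (l * S n ω - c * V n ω) by ring, Real.exp_add]
      have : Real.exp (c * V n ω) ≤ Real.exp (c * v) :=
        Real.exp_le_exp.2 (mul_le_mul_of_nonneg_left h hc.le)
      exact mul_le_mul_of_nonneg_right this (Real.exp_pos _).le
    calc ∫ ω, Real.exp (l * S n ω) ∂μ ≤ ∫ ω, Real.exp (c * v) * Z n ω ∂μ :=
          integral_mono_ae hexpint ((hZint n).const_mul _) hle
    _ = Real.exp (c * v) * ∫ ω, Z n ω ∂μ := integral_const_mul _ _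
    _ ≤ Real.exp (c * v) * 1 := mul_le_mul_of_nonneg_left (key n) (Real.exp_pos _).le
    _ = Real.exp (c * v) := mul_one _
  have hmarkov := mul_meas_ge_le_integral_of_nonneg
    (μ := μ) (f := fun ω => Real.exp (l * S n ω))
    (ae_of_all _ fun ω => (Real.exp_pos _).le) hexpint (Real.exp (l * t))
  have hset : {ω | Real.exp (l * t) ≤ Real.exp (l * S n ω)} = {ω | t ≤ S n ω} := by
    ext ω
    simp [Real.exp_le_exp, mul_le_mul_iff_right₀ hl]
  have htail : (μ {ω | t ≤ S n ω}).toReal ≤ δ := by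
    rw [hset] at hmarkov
    have h1 : Real.exp (l * t) * (μ {ω | t ≤ S n ω}).toReal ≤ Real.exp (c * v) :=
      hmarkov.trans hEexp
    have h2 : (μ {ω | t ≤ S n ω}).toReal ≤ Real.exp (c * v) / Real.exp (l * t) := by
      rw [le_div_iff₀ (Real.exp_pos _)]
      linarith [h1]
    calc (μ {ω | t ≤ S n ω}).toReal ≤ Real.exp (c * v) / Real.exp (l * t) := h2
    _ = Real.exp (c * v - l * t) := (Real.exp_sub _ _).symm
    _ ≤ Real.exp (-L) := Real.exp_le_exp.2 hexp_key
    _ = δ := by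
        rw [hLdef, one_div, Real.log_inv, neg_neg, Real.exp_log hδ0]
  show 1 - δ ≤ (μ {ω | S n ω ≤ t}).toReal
  have hBmeas : MeasurableSet {ω | S n ω ≤ t} := measurableSet_le (hSmeas n) measurable_const
  have hcompl : {ω | S n ω ≤ t}ᶜ ⊆ {ω | t ≤ S n ω} := by
    intro ω h
    simp only [Set.mem_compl_iff, Set.mem_setOf_eq, not_le] at h ⊢
    exact h.le
  have hsum1 : (μ {ω | S n ω ≤ t}).toReal + (μ {ω | S n ω ≤ t}ᶜ).toReal = 1 := by
    rw [← ENNReal.toReal_add (measure_ne_top _ _) (measure_ne_top _ _),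
      measure_add_measure_compl hBmeas, measure_univ, ENNReal.toReal_one]
  have h2 : (μ {ω | S n ω ≤ t}ᶜ).toReal ≤ δ :=
    le_trans (ENNReal.toReal_mono (measure_ne_top _ _) (measure_mono hcompl)) htail
  linarith
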